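/- Let S = {(v,w) ∈ ℕ² : 0 ≤ v ≤ 3 and 0 ≤ w ≤ 3} index the degree-3 maximal order basis on the reference quadrilateral. Let M be the diagonal real S×S matrix with M_{(v,w),(v,w)} = 4/((2v+1)(2w+1)). For real parameters q0, q1, q2, let Q be the symmetric S×S matrix whose only nonzero entries (listing one entry of each symmetric pair) are Q_{(1,1),(3,3)} = q2, Q_{(2,1),(2,3)} = Q_{(1,2),(3,2)} = −3·q2/5, Q_{(3,1),(1,3)} = q2, Q_{(3,1),(3,3)} = Q_{(1,3),(3,3)} = −5·q1/3, Q_{(2,2),(2,2)} = 9·q2/25, Q_{(3,2),(3,2)} = Q_{(2,3),(2,3)} = q1, and Q_{(3,3),(3,3)} = q0. Then M + Q is positive definite if and only if q2² < 16/441, 140·q1 − 189·q2² + 16 > 0, and (4 − 21·q2)·(1008·q2 + 2352·q0 + 12348·q2·q0 − 5292·q2² − 27783·q2³ − 68600·q1² + 192) > 0. -/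

import Mathlib

/-- Modal mass matrix of the degree-3 maximal order tensor-product Legendre basis:
`M_{(v,w),(v,w)} = 4/((2v+1)(2w+1))`. -/
noncomputable def massMO3 : Matrix (Fin 4 × Fin 4) (Fin 4 × Fin 4) ℝ :=
  Matrix.diagonal fun p =>
    (4 : ℝ) / (((2 * (p.1 : ℕ) + 1) * (2 * (p.2 : ℕ) + 1) : ℕ) : ℝ)

/-- The symmetric filter matrix `Q(q0, q1, q2)` for the degree-3 maximal order basis. -/
noncomputable def filterMO3 (q0 q1 q2 : ℝ) : Matrix (Fin 4 × Fin 4) (Fin 4 × Fin 4) ℝ :=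
  fun i j =>
    if (i = (1, 1) ∧ j = (3, 3)) ∨ (i = (3, 3) ∧ j = (1, 1)) ∨
       (i = (3, 1) ∧ j = (1, 3)) ∨ (i = (1, 3) ∧ j = (3, 1)) then q2
    else if (i = (2, 1) ∧ j = (2, 3)) ∨ (i = (2, 3) ∧ j = (2, 1)) ∨
            (i = (1, 2) ∧ j = (3, 2)) ∨ (i = (3, 2) ∧ j = (1, 2)) then -3 * q2 / 5
    else if (i = (3, 1) ∧ j = (3, 3)) ∨ (i = (3, 3) ∧ j = (3, 1)) ∨
            (i = (1, 3) ∧ j = (3, 3)) ∨ (i = (3, 3) ∧ j = (1, 3)) then -5 * q1 / 3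
    else if i = (2, 2) ∧ j = (2, 2) then 9 * q2 / 25
    else if (i = (3, 2) ∧ j = (3, 2)) ∨ (i = (2, 3) ∧ j = (2, 3)) then q1
    else if i = (3, 3) ∧ j = (3, 3) then q0
    else 0

/-- The quadratic form of the 2×2 coupled blocks. -/
noncomputable def B2 (q1 q2 x y : ℝ) : ℝ := 4/15*x^2 - 6*q2/5*x*y + (4/35+q1)*y^2

/-- The quadratic form of the 4×4 coupled block. -/
noncomputable def B4 (q0 q1 q2 x1 x2 x3 x4 : ℝ) : ℝ :=
  4/9*x1^2 + 4/21*x2^2 + 4/21*x3^2 + (4/49+q0)*x4^2 + 2*q2*x1*x4 + 2*q2*x2*x3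
    - 10*q1/3*(x2*x4 + x3*x4)

private lemma sq_pos' {a : ℝ} (h : a ≠ 0) : 0 < a ^ 2 :=
  lt_of_le_of_ne (sq_nonneg a) (Ne.symm (pow_ne_zero 2 h))

set_option maxHeartbeats 2000000 in
lemma expandQF (q0 q1 q2 : ℝ) (x : Fin 4 × Fin 4 → ℝ) :
    dotProduct (star x) ((massMO3 + filterMO3 q0 q1 q2).mulVec x) =
      4*(x (0,0))^2 + 4/3*(x (0,1))^2 + 4/5*(x (0,2))^2 + 4/7*(x (0,3))^2
      + 4/3*(x (1,0))^2 + 4/5*(x (2,0))^2 + 4/7*(x (3,0))^2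
      + (4+9*q2)/25*(x (2,2))^2
      + B2 q1 q2 (x (2,1)) (x (2,3)) + B2 q1 q2 (x (1,2)) (x (3,2))
      + B4 q0 q1 q2 (x (1,1)) (x (3,1)) (x (1,3)) (x (3,3)) := by
  have hsum : ∀ f : Fin 4 × Fin 4 → ℝ, ∑ p, f p =
      f (0,0) + f (0,1) + f (0,2) + f (0,3) + f (1,0) + f (1,1) + f (1,2) + f (1,3)
      + f (2,0) + f (2,1) + f (2,2) + f (2,3) + f (3,0) + f (3,1) + f (3,2) + f (3,3) := by
    intro f
    rw [Fintype.sum_prod_type]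
    rw [Fin.sum_univ_four]
    rw [Fin.sum_univ_four, Fin.sum_univ_four, Fin.sum_univ_four, Fin.sum_univ_four]
    ring
  rw [show (star x) = x from star_trivial x]
  simp only [dotProduct, Matrix.mulVec]
  rw [hsum]
  simp only [hsum]
  simp (config := { decide := true }) only [Matrix.add_apply, massMO3, filterMO3,
    Matrix.diagonal_apply, Prod.mk.injEq]
  norm_num [B2, B4, show ((3:Fin 4):ℕ) = 3 from rfl, show ((2:Fin 4):ℕ) = 2 from rfl,
    show ((1:Fin 4):ℕ) = 1 from rfl, show ((0:Fin 4):ℕ) = 0 from rfl]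
  ring

lemma b2_key (q1 q2 x y : ℝ) :
    4/15 * B2 q1 q2 x y =
      (4/15*x - 3*q2/5*y)^2 + (140*q1 - 189*q2^2 + 16)/525 * y^2 := by
  unfold B2; ring

lemma b2_nonneg {q1 q2 : ℝ} (h2 : 140*q1 - 189*q2^2 + 16 > 0) (x y : ℝ) :
    0 ≤ B2 q1 q2 x y := by
  nlinarith [b2_key q1 q2 x y, sq_nonneg (4/15*x - 3*q2/5*y), sq_nonneg y,
    mul_nonneg (le_of_lt h2) (sq_nonneg y)]

lemma b2_pos {q1 q2 : ℝ} (h2 : 140*q1 - 189*q2^2 + 16 > 0) {x y : ℝ}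
    (hxy : x ≠ 0 ∨ y ≠ 0) : 0 < B2 q1 q2 x y := by
  have key := b2_key q1 q2 x y
  by_cases hy : y = 0
  · subst hy
    have hx : x ≠ 0 := by tauto
    nlinarith [sq_pos' hx]
  · nlinarith [sq_nonneg (4/15*x - 3*q2/5*y), mul_pos h2 (sq_pos' hy)]

lemma b4_key (q0 q1 q2 x1 x2 x3 x4 : ℝ) :
    (4/9)*(4/21)*(16/441 - q2^2) * B4 q0 q1 q2 x1 x2 x3 x4 =
      (4/21)*(16/441 - q2^2)*(4/9*x1 + q2*x4)^2
      + (4/9)*(16/441 - q2^2)*(4/21*x2 + q2*x3 - 5*q1/3*x4)^2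
      + (4/9)*((16/441 - q2^2)*x3 - 5*q1/3*(4/21 - q2)*x4)^2
      + (4/21)*(256/194481 - 32/441*q2^2 + q2^4 - 800/1701*q1^2 + 200/81*q1^2*q2
          + 64/3969*q0 - 4/9*q0*q2^2)*x4^2 := by
  unfold B4; ring

lemma b4_nonneg {q0 q1 q2 : ℝ} (h1 : q2^2 < 16/441)
    (hD : 0 < 256/194481 - 32/441*q2^2 + q2^4 - 800/1701*q1^2 + 200/81*q1^2*q2
          + 64/3969*q0 - 4/9*q0*q2^2) (x1 x2 x3 x4 : ℝ) :
    0 ≤ B4 q0 q1 q2 x1 x2 x3 x4 := by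
  have hbb : (0:ℝ) < 16/441 - q2^2 := by linarith
  nlinarith [b4_key q0 q1 q2 x1 x2 x3 x4,
    mul_nonneg hbb.le (sq_nonneg (4/9*x1 + q2*x4)),
    mul_nonneg hbb.le (sq_nonneg (4/21*x2 + q2*x3 - 5*q1/3*x4)),
    sq_nonneg ((16/441 - q2^2)*x3 - 5*q1/3*(4/21 - q2)*x4),
    mul_nonneg hD.le (sq_nonneg x4), hbb]

lemma b4_pos {q0 q1 q2 : ℝ} (h1 : q2^2 < 16/441)
    (hD : 0 < 256/194481 - 32/441*q2^2 + q2^4 - 800/1701*q1^2 + 200/81*q1^2*q2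
          + 64/3969*q0 - 4/9*q0*q2^2) {x1 x2 x3 x4 : ℝ}
    (hx : x1 ≠ 0 ∨ x2 ≠ 0 ∨ x3 ≠ 0 ∨ x4 ≠ 0) :
    0 < B4 q0 q1 q2 x1 x2 x3 x4 := by
  have hbb : (0:ℝ) < 16/441 - q2^2 := by linarith
  have key := b4_key q0 q1 q2 x1 x2 x3 x4
  by_cases h4 : x4 = 0
  · subst h4
    by_cases h3 : x3 = 0
    · subst h3
      by_cases h2 : x2 = 0
      · subst h2
        have hx1 : x1 ≠ 0 := by tauto
        nlinarith [mul_pos hbb (sq_pos' hx1)]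
      · nlinarith [mul_pos hbb (sq_pos' h2), mul_nonneg hbb.le (sq_nonneg (4/9*x1))]
    · nlinarith [mul_pos (mul_pos hbb hbb) (sq_pos' h3),
        mul_nonneg hbb.le (sq_nonneg (4/9*x1)),
        mul_nonneg hbb.le (sq_nonneg (4/21*x2 + q2*x3))]
  · nlinarith [mul_pos hD (sq_pos' h4),
      mul_nonneg hbb.le (sq_nonneg (4/9*x1 + q2*x4)),
      mul_nonneg hbb.le (sq_nonneg (4/21*x2 + q2*x3 - 5*q1/3*x4)),
      sq_nonneg ((16/441 - q2^2)*x3 - 5*q1/3*(4/21 - q2)*x4)]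

lemma MO3_isHermitian (q0 q1 q2 : ℝ) : (massMO3 + filterMO3 q0 q1 q2).IsHermitian := by
  apply Matrix.IsHermitian.add
  · exact Matrix.isHermitian_diagonal _
  · ext i j
    simp only [Matrix.conjTranspose_apply, star_trivial]
    show filterMO3 q0 q1 q2 j i = filterMO3 q0 q1 q2 i j
    unfold filterMO3
    exact if_congr (by tauto) rfl (if_congr (by tauto) rfl (if_congr (by tauto) rfl
      (if_congr (by tauto) rfl (if_congr (by tauto) rfl (if_congr (by tauto) rfl rfl)))))

set_option maxHeartbeats 8000000 in
/-- For the degree-3 maximal order basis, `M + Q` is positive definite iff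
`q2² < 16/441`, `140 q1 - 189 q2² + 16 > 0`, and
`(4 - 21 q2)(1008 q2 + 2352 q0 + 12348 q2 q0 - 5292 q2² - 27783 q2³ - 68600 q1² + 192) > 0`. -/
theorem stmt_1 (q0 q1 q2 : ℝ) :
    (massMO3 + filterMO3 q0 q1 q2).PosDef ↔
      q2 ^ 2 < 16 / 441 ∧
      140 * q1 - 189 * q2 ^ 2 + 16 > 0 ∧
      (4 - 21 * q2) *
        (1008 * q2 + 2352 * q0 + 12348 * q2 * q0 - 5292 * q2 ^ 2 - 27783 * q2 ^ 3 -
          68600 * q1 ^ 2 + 192) > 0 := by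
  constructor
  · intro hPD
    have hpd : ∀ x : Fin 4 × Fin 4 → ℝ, x ≠ 0 →
        0 < dotProduct (star x) ((massMO3 + filterMO3 q0 q1 q2).mulVec x) :=
      fun x hx => hPD.dotProduct_mulVec_pos hx
    -- condition 1 from two test vectors
    have hvp := hpd (fun p => if p = (3,1) then 1 else if p = (1,3) then 1 else 0) (by
      intro h
      have := congrFun h (3,1)
      simp (config := { decide := true }) at this)
    have hvm := hpd (fun p => if p = (3,1) then 1 else if p = (1,3) then -1 else 0) (by
      intro h
      have := congrFun h (3,1)
      simp (config := { decide := true }) at this)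
    rw [expandQF] at hvp hvm
    simp (config := { decide := true }) [B2, B4] at hvp hvm
    have h1 : q2 ^ 2 < 16 / 441 := by nlinarith [hvp, hvm]
    refine ⟨h1, ?_, ?_⟩
    · -- condition 2
      have hv2 := hpd (fun p => if p = (1,2) then 3*q2/5 else if p = (3,2) then 4/15 else 0) (by
        intro h
        have := congrFun h (3,2)
        simp (config := { decide := true }) at this)
      rw [expandQF] at hv2
      simp (config := { decide := true }) [B2, B4] at hv2
      nlinarith [hv2]
    · -- condition 3 via the cofactor vector
      have hdet3 : (0:ℝ) < 64/3969 - 4/9*q2^2 := by nlinarith [h1]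
      have hv4 := hpd (fun p =>
          if p = (1,1) then -16/441*q2 + q2^3
          else if p = (3,1) then 80/567*q1 - 20/27*q1*q2
          else if p = (1,3) then 80/567*q1 - 20/27*q1*q2
          else if p = (3,3) then 64/3969 - 4/9*q2^2 else 0) (by
        intro h
        have := congrFun h (3,3)
        simp (config := { decide := true }) at this
        linarith [hdet3, this])
      rw [expandQF] at hv4
      simp (config := { decide := true }) [B2] at hv4
      have hQ4 : B4 q0 q1 q2 (-16/441*q2 + q2^3) (80/567*q1 - 20/27*q1*q2)
          (80/567*q1 - 20/27*q1*q2) (64/3969 - 4/9*q2^2) =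
          (256/194481 - 32/441*q2^2 + q2^4 - 800/1701*q1^2 + 200/81*q1^2*q2
            + 64/3969*q0 - 4/9*q0*q2^2) * (64/3969 - 4/9*q2^2) := by
        unfold B4; ring
      rw [hQ4] at hv4
      have hD : (0:ℝ) < 256/194481 - 32/441*q2^2 + q2^4 - 800/1701*q1^2 + 200/81*q1^2*q2
          + 64/3969*q0 - 4/9*q0*q2^2 := by
        nlinarith [hv4, hdet3]
      nlinarith [hD]
  · rintro ⟨h1, h2, h3⟩
    have hfac : (0:ℝ) < 4 - 21*q2 := by nlinarith [sq_nonneg (q2 - 4/21)]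
    have hD : (0:ℝ) < 256/194481 - 32/441*q2^2 + q2^4 - 800/1701*q1^2 + 200/81*q1^2*q2
        + 64/3969*q0 - 4/9*q0*q2^2 := by nlinarith [h3]
    have h22 : (0:ℝ) < (4+9*q2)/25 := by nlinarith [sq_nonneg (q2 + 4/21)]
    refine Matrix.PosDef.of_dotProduct_mulVec_pos (MO3_isHermitian q0 q1 q2) ?_
    intro x hx
    rw [expandQF]
    have u1 : (0:ℝ) ≤ 4*(x (0,0))^2 := by positivity
    have u2 : (0:ℝ) ≤ 4/3*(x (0,1))^2 := by positivity
    have u3 : (0:ℝ) ≤ 4/5*(x (0,2))^2 := by positivity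
    have u4 : (0:ℝ) ≤ 4/7*(x (0,3))^2 := by positivity
    have u5 : (0:ℝ) ≤ 4/3*(x (1,0))^2 := by positivity
    have u6 : (0:ℝ) ≤ 4/5*(x (2,0))^2 := by positivity
    have u7 : (0:ℝ) ≤ 4/7*(x (3,0))^2 := by positivity
    have u8 : (0:ℝ) ≤ (4+9*q2)/25*(x (2,2))^2 := mul_nonneg h22.le (sq_nonneg _)
    have w1 : (0:ℝ) ≤ B2 q1 q2 (x (2,1)) (x (2,3)) := b2_nonneg h2 _ _
    have w2 : (0:ℝ) ≤ B2 q1 q2 (x (1,2)) (x (3,2)) := b2_nonneg h2 _ _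
    have w3 : (0:ℝ) ≤ B4 q0 q1 q2 (x (1,1)) (x (3,1)) (x (1,3)) (x (3,3)) :=
      b4_nonneg h1 hD _ _ _ _
    by_cases c1 : x (0,0) = 0
    · by_cases c2 : x (0,1) = 0
      · by_cases c3 : x (0,2) = 0
        · by_cases c4 : x (0,3) = 0
          · by_cases c5 : x (1,0) = 0
            · by_cases c6 : x (2,0) = 0
              · by_cases c7 : x (3,0) = 0
                · by_cases c8 : x (2,2) = 0
                  · by_cases c9 : x (2,1) = 0
                    · by_cases c10 : x (2,3) = 0
                      · by_cases c11 : x (1,2) = 0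
                        · by_cases c12 : x (3,2) = 0
                          · by_cases c13 : x (1,1) = 0
                            · by_cases c14 : x (3,1) = 0
                              · by_cases c15 : x (1,3) = 0
                                · by_cases c16 : x (3,3) = 0
                                  · exact absurd (by
                                      funext p
                                      obtain ⟨i, j⟩ := p
                                      fin_cases i <;> fin_cases j <;> assumption) hx
                                  · have := b4_pos h1 hD
                                      (Or.inr (Or.inr (Or.inr c16)) :
                                        x (1,1) ≠ 0 ∨ x (3,1) ≠ 0 ∨ x (1,3) ≠ 0 ∨ x (3,3) ≠ 0)
                                    linarith
                                · have := b4_pos h1 hD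
                                    (Or.inr (Or.inr (Or.inl c15)) :
                                      x (1,1) ≠ 0 ∨ x (3,1) ≠ 0 ∨ x (1,3) ≠ 0 ∨ x (3,3) ≠ 0)
                                  linarith
                              · have := b4_pos h1 hD
                                  (Or.inr (Or.inl c14) :
                                    x (1,1) ≠ 0 ∨ x (3,1) ≠ 0 ∨ x (1,3) ≠ 0 ∨ x (3,3) ≠ 0)
                                linarith
                            · have := b4_pos h1 hD
                                (Or.inl c13 :
                                  x (1,1) ≠ 0 ∨ x (3,1) ≠ 0 ∨ x (1,3) ≠ 0 ∨ x (3,3) ≠ 0)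
                              linarith
                          · have := b2_pos h2 (Or.inr c12 : x (1,2) ≠ 0 ∨ x (3,2) ≠ 0)
                            linarith
                        · have := b2_pos h2 (Or.inl c11 : x (1,2) ≠ 0 ∨ x (3,2) ≠ 0)
                          linarith
                      · have := b2_pos h2 (Or.inr c10 : x (2,1) ≠ 0 ∨ x (2,3) ≠ 0)
                        linarith
                    · have := b2_pos h2 (Or.inl c9 : x (2,1) ≠ 0 ∨ x (2,3) ≠ 0)
                      linarith
                  · have := mul_pos h22 (sq_pos' c8)
                    linarith
                · have : (0:ℝ) < 4/7*(x (3,0))^2 := by positivity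
                  linarith
              · have : (0:ℝ) < 4/5*(x (2,0))^2 := by positivity
                linarith
            · have : (0:ℝ) < 4/3*(x (1,0))^2 := by positivity
              linarith
          · have : (0:ℝ) < 4/7*(x (0,3))^2 := by positivity
            linarith
        · have : (0:ℝ) < 4/5*(x (0,2))^2 := by positivity
          linarith
      · have : (0:ℝ) < 4/3*(x (0,1))^2 := by positivity
        linarith
    · have : (0:ℝ) < 4*(x (0,0))^2 := by positivity
      linarith
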